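/- Let A, B, C be complex vector spaces with decompositions B = ⊕_{q=1}^R B_q and C = ⊕_{r=1}^R C_r, dim B_p = dim C_p = L_p, and let A have basis elements such that a^{(p)} := a₁ + λᵖ a₂ for pairwise distinct nonzero scalars λ¹, …, λᴿ ∈ ℂ span pairwise distinct lines in a 2-dimensional space ⟨a₁,a₂⟩ ⊆ A. Fix bases (b_{p,j})_{j=1}^{L_p} of B_p and (c_{p,j})_{j=1}^{L_p} of C_p, and set φ_p = a^{(p)} ⊗ Σ_{j=1}^{L_p} b_{p,j} ⊗ c_{p,j}. Define W_p := A ⊗ ⟨Σⱼ b_{p,j}⊗c_{p,j}⟩ + ⟨a^{(p)}⟩ ⊗ B ⊗ C_p + ⟨a^{(p)}⟩ ⊗ B_p ⊗ C ⊆ A⊗B⊗C. Then W₁, …, W_R are in direct sum: W_p ∩ Σ_{q≠p} W_q = {0} for every p. -/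

import Mathlib

open TensorProduct

/-- The subspace `X ⊗ Y ⊗ Z` of `A ⊗ B ⊗ C`. -/
noncomputable def tp3 {A B C : Type*} [AddCommGroup A] [Module ℂ A]
    [AddCommGroup B] [Module ℂ B] [AddCommGroup C] [Module ℂ C]
    (X : Submodule ℂ A) (Y : Submodule ℂ B) (Z : Submodule ℂ C) :
    Submodule ℂ (A ⊗[ℂ] (B ⊗[ℂ] C)) :=
  Submodule.span ℂ {w | ∃ x ∈ X, ∃ y ∈ Y, ∃ z ∈ Z, w = x ⊗ₜ[ℂ] (y ⊗ₜ[ℂ] z)}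

/-- `A ⊗ ⟨θ⟩` for `θ ∈ B ⊗ C`. -/
noncomputable def modA {A B C : Type*} [AddCommGroup A] [Module ℂ A]
    [AddCommGroup B] [Module ℂ B] [AddCommGroup C] [Module ℂ C]
    (θ : B ⊗[ℂ] C) : Submodule ℂ (A ⊗[ℂ] (B ⊗[ℂ] C)) :=
  LinearMap.range ((TensorProduct.mk ℂ A (B ⊗[ℂ] C)).flip θ)

/-- Projections associated to an internal direct sum decomposition. -/
lemma exists_proj_aux {M : Type*} [AddCommGroup M] [Module ℂ M] {R : ℕ}
    (S : Fin R → Submodule ℂ M) (hind : iSupIndep S) (hspan : (⨆ p, S p) = ⊤) :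
    ∃ P : Fin R → (M →ₗ[ℂ] M),
      (∀ q, ∀ x ∈ S q, P q x = x) ∧
      (∀ q q', q' ≠ q → ∀ x ∈ S q', P q x = 0) ∧
      (∀ x : M, ∑ q, P q x = x) := by
  have hcompl : ∀ q, IsCompl (S q) (⨆ (j) (_ : j ≠ q), S j) := by
    intro q
    refine ⟨hind q, codisjoint_iff.mpr ?_⟩
    rw [← top_le_iff, ← hspan]
    refine iSup_le fun j => ?_
    by_cases h : j = q
    · subst h; exact le_sup_left
    · exact le_sup_of_le_right (le_iSup₂ (f := fun (j : Fin R) (_ : j ≠ q) => S j) j h)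
  set P : Fin R → (M →ₗ[ℂ] M) :=
    fun q => (S q).subtype ∘ₗ (S q).projectionOnto _ (hcompl q) with hP
  have hmem : ∀ q, ∀ x ∈ S q, P q x = x := by
    intro q x hx
    have := Submodule.projectionOnto_apply_left (hcompl q) ⟨x, hx⟩
    simp only [hP, LinearMap.comp_apply, Submodule.subtype_apply]
    rw [show x = ((⟨x, hx⟩ : S q) : M) from rfl, this]
  have hzero : ∀ q q', q' ≠ q → ∀ x ∈ S q', P q x = 0 := by
    intro q q' hne x hx
    have hx' : x ∈ ⨆ (j) (_ : j ≠ q), S j :=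
      Submodule.mem_iSup_of_mem q' (Submodule.mem_iSup_of_mem hne hx)
    simp only [hP, LinearMap.comp_apply, Submodule.subtype_apply]
    rw [Submodule.projectionOnto_apply_of_mem_right (hcompl q) hx']
    rfl
  refine ⟨P, hmem, hzero, ?_⟩
  intro x
  have hx : x ∈ ⨆ p, S p := hspan ▸ Submodule.mem_top
  refine Submodule.iSup_induction (motive := fun x => ∑ q, P q x = x) S hx ?_ ?_ ?_
  · intro s x hx
    rw [Finset.sum_eq_single s (fun q _ hq => hzero q s (Ne.symm hq) x hx)
      (fun h => absurd (Finset.mem_univ s) h)]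
    exact hmem s x hx
  · simp
  · intro x y hx hy
    simp only [map_add, Finset.sum_add_distrib, hx, hy]

/-- A dual pair for two linearly independent vectors. -/
lemma exists_dual_pair {A : Type*} [AddCommGroup A] [Module ℂ A] {x y : A}
    (h : LinearIndependent ℂ ![x, y]) :
    ∃ f : A →ₗ[ℂ] ℂ, f x = 1 ∧ f y = 0 := by
  have hx : x ∉ Submodule.span ℂ {y} := by
    intro hx
    rw [Submodule.mem_span_singleton] at hx
    obtain ⟨c, rfl⟩ := hx
    have := (LinearIndependent.pair_iff.mp h 1 (-c)
      (by rw [one_smul, neg_smul, add_neg_cancel])).1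
    exact one_ne_zero this
  obtain ⟨f, hfx, hfy⟩ :=
    Submodule.exists_dual_map_eq_bot_of_notMem hx inferInstance
  have hy0 : f y = 0 := by
    have : f y ∈ Submodule.map f (Submodule.span ℂ {y}) :=
      Submodule.mem_map_of_mem (Submodule.mem_span_singleton_self y)
    rw [hfy] at this
    simpa using this
  refine ⟨(f x)⁻¹ • f, ?_, ?_⟩
  · simp [inv_mul_cancel₀ hfx]
  · simp [hy0]

/-- `⟨x⟩ ⊗ M` and `⟨y⟩ ⊗ M` are disjoint for linearly independent `x, y`. -/
lemma inf_range_mk_eq_bot {A M : Type*} [AddCommGroup A] [Module ℂ A]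
    [AddCommGroup M] [Module ℂ M] {x y : A} (h : LinearIndependent ℂ ![x, y]) :
    LinearMap.range (TensorProduct.mk ℂ A M x) ⊓
      LinearMap.range (TensorProduct.mk ℂ A M y) = ⊥ := by
  obtain ⟨f, hfx, hfy⟩ := exists_dual_pair h
  rw [eq_bot_iff]
  rintro t ⟨h1, h2⟩
  obtain ⟨u, rfl⟩ := h1
  obtain ⟨v, hv⟩ := h2
  set g : A ⊗[ℂ] M →ₗ[ℂ] M :=
    (TensorProduct.lid ℂ M).toLinearMap ∘ₗ (LinearMap.rTensor M f) with hg
  have hgx : g (TensorProduct.mk ℂ A M x u) = u := by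
    simp [hg, TensorProduct.mk_apply, hfx]
  have hgy : g (TensorProduct.mk ℂ A M y v) = 0 := by
    simp [hg, TensorProduct.mk_apply, hfy]
  have hu : u = 0 := by rw [← hgx, ← hv, hgy]
  simp [hu]

/-- Independence of `a₁ + s • a₂` and `a₁ + t • a₂` for `s ≠ t`. -/
lemma pair_indep {A : Type*} [AddCommGroup A] [Module ℂ A] {a₁ a₂ : A}
    (ha : LinearIndependent ℂ ![a₁, a₂]) {s t : ℂ} (hst : s ≠ t) :
    LinearIndependent ℂ ![a₁ + s • a₂, a₁ + t • a₂] := by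
  rw [LinearIndependent.pair_iff] at ha ⊢
  intro u v huv
  have key : (u + v) • a₁ + (u * s + v * t) • a₂ = 0 := by
    rw [← huv]; module
  obtain ⟨h1, h2⟩ := ha (u + v) (u * s + v * t) key
  have hu : u * (s - t) = 0 := by linear_combination h2 - t * h1
  have hu0 : u = 0 := (mul_eq_zero.mp hu).resolve_right (sub_ne_zero.mpr hst)
  refine ⟨hu0, ?_⟩
  simpa [hu0] using h1

/-- With `B = ⊕ B_p`, `C = ⊕ C_p`, `dim B_p = dim C_p = L_p`, bases `b_{p,j}` of
`B_p`, `c_{p,j}` of `C_p`, pairwise distinct nonzero `λᵖ` and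
`a⁽ᵖ⁾ = a₁ + λᵖ a₂` with `a₁, a₂` independent, the tangent spaces
`W_p = A⊗⟨Σⱼ b_{p,j}⊗c_{p,j}⟩ + ⟨a⁽ᵖ⁾⟩⊗B⊗C_p + ⟨a⁽ᵖ⁾⟩⊗B_p⊗C`
are in direct sum: `W_p ∩ Σ_{q≠p} W_q = 0` for all `p`. -/
theorem tangent_spaces_direct_sum_1LL {A B C : Type*}
    [AddCommGroup A] [Module ℂ A] [AddCommGroup B] [Module ℂ B]
    [AddCommGroup C] [Module ℂ C]
    [FiniteDimensional ℂ A] [FiniteDimensional ℂ B] [FiniteDimensional ℂ C]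
    (R : ℕ) (L : Fin R → ℕ)
    (a₁ a₂ : A) (ha : LinearIndependent ℂ ![a₁, a₂])
    (lam : Fin R → ℂ) (hlam0 : ∀ p, lam p ≠ 0) (hlam : Function.Injective lam)
    (Bsub : Fin R → Submodule ℂ B) (Csub : Fin R → Submodule ℂ C)
    (hBindep : iSupIndep Bsub) (hBspan : (⨆ p, Bsub p) = ⊤)
    (hCindep : iSupIndep Csub) (hCspan : (⨆ p, Csub p) = ⊤)
    (b : (p : Fin R) → Module.Basis (Fin (L p)) ℂ (Bsub p))
    (c : (p : Fin R) → Module.Basis (Fin (L p)) ℂ (Csub p))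
    (W : Fin R → Submodule ℂ (A ⊗[ℂ] (B ⊗[ℂ] C)))
    (hW : ∀ p, W p =
      modA (∑ j : Fin (L p), (b p j : B) ⊗ₜ[ℂ] (c p j : C)) ⊔
        tp3 (Submodule.span ℂ {a₁ + lam p • a₂}) ⊤ (Csub p) ⊔
        tp3 (Submodule.span ℂ {a₁ + lam p • a₂}) (Bsub p) ⊤) :
    ∀ p, W p ⊓ (⨆ q : {q : Fin R // q ≠ p}, W q) = ⊥ := by
  obtain ⟨P, hPmem, hPzero, hPsum⟩ := exists_proj_aux Bsub hBindep hBspan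
  obtain ⟨Q, hQmem, hQzero, hQsum⟩ := exists_proj_aux Csub hCindep hCspan
  set av : Fin R → A := fun s => a₁ + lam s • a₂ with hav
  set π : Fin R → Fin R → ((A ⊗[ℂ] (B ⊗[ℂ] C)) →ₗ[ℂ] (A ⊗[ℂ] (B ⊗[ℂ] C))) :=
    fun q r => TensorProduct.map LinearMap.id (TensorProduct.map (P q) (Q r)) with hπ
  set Aspan : Fin R → Submodule ℂ (A ⊗[ℂ] (B ⊗[ℂ] C)) :=
    fun s => LinearMap.range (TensorProduct.mk ℂ A (B ⊗[ℂ] C) (av s)) with hAspan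
  have hπtmul : ∀ q r (x : A) (y : B) (z : C),
      π q r (x ⊗ₜ[ℂ] (y ⊗ₜ[ℂ] z)) = x ⊗ₜ[ℂ] ((P q y) ⊗ₜ[ℂ] (Q r z)) := by
    intro q r x y z
    simp [hπ]
  -- the image of the "modA" part is zero unless q = r = s
  have hmodA : ∀ s q r, (q ≠ s ∨ r ≠ s) →
      Submodule.map (π q r)
        (modA (A := A) (∑ j : Fin (L s), (b s j : B) ⊗ₜ[ℂ] (c s j : C))) ≤ ⊥ := by
    intro s q r hqr
    have hθ : TensorProduct.map (P q) (Q r)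
        (∑ j : Fin (L s), (b s j : B) ⊗ₜ[ℂ] (c s j : C)) = 0 := by
      rw [map_sum]
      refine Finset.sum_eq_zero fun j _ => ?_
      rw [TensorProduct.map_tmul]
      rcases hqr with h | h
      · rw [hPzero q s (Ne.symm h) _ (b s j).2, TensorProduct.zero_tmul]
      · rw [hQzero r s (Ne.symm h) _ (c s j).2, TensorProduct.tmul_zero]
    rintro t ⟨w, ⟨u, rfl⟩, rfl⟩
    show (π q r) (u ⊗ₜ[ℂ] (∑ j : Fin (L s), (b s j : B) ⊗ₜ[ℂ] (c s j : C))) ∈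
      (⊥ : Submodule ℂ (A ⊗[ℂ] (B ⊗[ℂ] C)))
    simp only [hπ, TensorProduct.map_tmul, hθ, TensorProduct.tmul_zero]
    exact Submodule.zero_mem _
  -- the image of the two `tp3` parts is inside `Aspan s`
  have htp3C : ∀ s q r,
      Submodule.map (π q r) (tp3 (Submodule.span ℂ {av s}) ⊤ (Csub s)) ≤ Aspan s := by
    intro s q r
    rw [tp3, Submodule.map_span, Submodule.span_le]
    rintro t ⟨w, ⟨x, hx, y, -, z, hz, rfl⟩, rfl⟩
    rw [Submodule.mem_span_singleton] at hx
    obtain ⟨μ, rfl⟩ := hx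
    refine ⟨μ • ((P q y) ⊗ₜ[ℂ] (Q r z)), ?_⟩
    rw [TensorProduct.mk_apply, hπtmul, ← TensorProduct.smul_tmul]
  have htp3B : ∀ s q r,
      Submodule.map (π q r) (tp3 (Submodule.span ℂ {av s}) (Bsub s) ⊤) ≤ Aspan s := by
    intro s q r
    rw [tp3, Submodule.map_span, Submodule.span_le]
    rintro t ⟨w, ⟨x, hx, y, hy, z, -, rfl⟩, rfl⟩
    rw [Submodule.mem_span_singleton] at hx
    obtain ⟨μ, rfl⟩ := hx
    refine ⟨μ • ((P q y) ⊗ₜ[ℂ] (Q r z)), ?_⟩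
    rw [TensorProduct.mk_apply, hπtmul, ← TensorProduct.smul_tmul]
  have htp3C0 : ∀ s q r, r ≠ s →
      Submodule.map (π q r) (tp3 (Submodule.span ℂ {av s}) ⊤ (Csub s)) ≤ ⊥ := by
    intro s q r hr
    rw [tp3, Submodule.map_span, Submodule.span_le]
    rintro t ⟨w, ⟨x, hx, y, -, z, hz, rfl⟩, rfl⟩
    have : π q r (x ⊗ₜ[ℂ] (y ⊗ₜ[ℂ] z)) = 0 := by
      rw [hπtmul, hQzero r s (Ne.symm hr) z hz, TensorProduct.tmul_zero,
        TensorProduct.tmul_zero]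
    simp [this]
  have htp3B0 : ∀ s q r, q ≠ s →
      Submodule.map (π q r) (tp3 (Submodule.span ℂ {av s}) (Bsub s) ⊤) ≤ ⊥ := by
    intro s q r hq
    rw [tp3, Submodule.map_span, Submodule.span_le]
    rintro t ⟨w, ⟨x, hx, y, hy, z, -, rfl⟩, rfl⟩
    have : π q r (x ⊗ₜ[ℂ] (y ⊗ₜ[ℂ] z)) = 0 := by
      rw [hπtmul, hPzero q s (Ne.symm hq) y hy, TensorProduct.zero_tmul,
        TensorProduct.tmul_zero]
    simp [this]
  have key1 : ∀ s q r, q ≠ s → r ≠ s → Submodule.map (π q r) (W s) ≤ ⊥ := by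
    intro s q r hq hr
    rw [hW s, Submodule.map_sup, Submodule.map_sup]
    exact sup_le (sup_le (hmodA s q r (Or.inl hq)) (htp3C0 s q r hr)) (htp3B0 s q r hq)
  have key2 : ∀ s q r, (q ≠ s ∨ r ≠ s) → Submodule.map (π q r) (W s) ≤ Aspan s := by
    intro s q r hqr
    rw [hW s, Submodule.map_sup, Submodule.map_sup]
    exact sup_le (sup_le ((hmodA s q r hqr).trans bot_le) (htp3C s q r)) (htp3B s q r)
  have hAdisj : ∀ s s' : Fin R, s ≠ s' → Aspan s ⊓ Aspan s' = ⊥ := by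
    intro s s' hss
    exact inf_range_mk_eq_bot (pair_indep ha (fun h => hss (hlam h)))
  -- totality of the projections
  have hsum : ∀ t : A ⊗[ℂ] (B ⊗[ℂ] C), ∑ q, ∑ r, π q r t = t := by
    intro t
    induction t using TensorProduct.induction_on with
    | zero => simp
    | add x y hx hy => simp only [map_add, Finset.sum_add_distrib, hx, hy]
    | tmul x m =>
      induction m using TensorProduct.induction_on with
      | zero => simp
      | add m₁ m₂ h1 h2 =>
        simp only [TensorProduct.tmul_add, map_add, Finset.sum_add_distrib, h1, h2]
      | tmul y z =>
        have step : ∀ q, ∑ r, π q r (x ⊗ₜ[ℂ] (y ⊗ₜ[ℂ] z)) = x ⊗ₜ[ℂ] ((P q y) ⊗ₜ[ℂ] z) := by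
          intro q
          calc ∑ r, π q r (x ⊗ₜ[ℂ] (y ⊗ₜ[ℂ] z))
              = ∑ r, x ⊗ₜ[ℂ] ((P q y) ⊗ₜ[ℂ] (Q r z)) := by
                exact Finset.sum_congr rfl fun r _ => hπtmul q r x y z
            _ = x ⊗ₜ[ℂ] ((P q y) ⊗ₜ[ℂ] (∑ r, Q r z)) := by
                conv_rhs => rw [TensorProduct.tmul_sum, TensorProduct.tmul_sum]
            _ = x ⊗ₜ[ℂ] ((P q y) ⊗ₜ[ℂ] z) := by rw [hQsum]
        calc ∑ q, ∑ r, π q r (x ⊗ₜ[ℂ] (y ⊗ₜ[ℂ] z))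
            = ∑ q, x ⊗ₜ[ℂ] ((P q y) ⊗ₜ[ℂ] z) := Finset.sum_congr rfl fun q _ => step q
          _ = x ⊗ₜ[ℂ] ((∑ q, P q y) ⊗ₜ[ℂ] z) := by
              conv_rhs => rw [TensorProduct.sum_tmul, TensorProduct.tmul_sum]
          _ = x ⊗ₜ[ℂ] (y ⊗ₜ[ℂ] z) := by rw [hPsum]
  intro p
  rw [eq_bot_iff]
  rintro w hw
  rw [Submodule.mem_inf] at hw
  obtain ⟨hw1, hw2⟩ := hw
  have hproj : ∀ q r, π q r w = 0 := by
    intro q r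
    have hmem2 : π q r w ∈ ⨆ (s : {q : Fin R // q ≠ p}), Submodule.map (π q r) (W s) := by
      rw [← Submodule.map_iSup]
      exact Submodule.mem_map_of_mem hw2
    by_cases hq : q = p <;> by_cases hr : r = p
    · have hb : (⨆ (s : {q' : Fin R // q' ≠ p}), Submodule.map (π q r) (W s)) ≤ ⊥ :=
        iSup_le fun s => key1 s q r (fun h => s.2 (h ▸ hq)) (fun h => s.2 (h ▸ hr))
      simpa using hb hmem2
    · have hq' : ∀ s : {q' : Fin R // q' ≠ p}, q ≠ (s : Fin R) :=
        fun s h => s.2 (h ▸ hq)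
      have h1 : π q r w ∈ Aspan p := by
        refine key2 p q r (Or.inr hr) (Submodule.mem_map_of_mem hw1)
      have h2 : π q r w ∈ Aspan r := by
        refine (iSup_le fun s => ?_ :
          (⨆ (s : {q' : Fin R // q' ≠ p}), Submodule.map (π q r) (W s)) ≤ Aspan r) hmem2
        by_cases hsr : (s : Fin R) = r
        · exact hsr ▸ key2 s q r (Or.inl (hq' s))
        · exact (key1 s q r (hq' s) (fun h => hsr h.symm)).trans bot_le
      have hd := hAdisj p r (fun h => hr h.symm)
      have : π q r w ∈ (⊥ : Submodule ℂ (A ⊗[ℂ] (B ⊗[ℂ] C))) := hd ▸ ⟨h1, h2⟩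
      simpa using this
    · have hr' : ∀ s : {q' : Fin R // q' ≠ p}, r ≠ (s : Fin R) :=
        fun s h => s.2 (h ▸ hr)
      have h1 : π q r w ∈ Aspan p := by
        refine key2 p q r (Or.inl hq) (Submodule.mem_map_of_mem hw1)
      have h2 : π q r w ∈ Aspan q := by
        refine (iSup_le fun s => ?_ :
          (⨆ (s : {q' : Fin R // q' ≠ p}), Submodule.map (π q r) (W s)) ≤ Aspan q) hmem2
        by_cases hsq : (s : Fin R) = q
        · exact hsq ▸ key2 s q r (Or.inr (hr' s))
        · exact (key1 s q r (fun h => hsq h.symm) (hr' s)).trans bot_le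
      have hd := hAdisj p q (fun h => hq h.symm)
      have : π q r w ∈ (⊥ : Submodule ℂ (A ⊗[ℂ] (B ⊗[ℂ] C))) := hd ▸ ⟨h1, h2⟩
      simpa using this
    · have := key1 p q r hq hr (Submodule.mem_map_of_mem hw1)
      simpa using this
  have hw0 : w = 0 := by
    calc w = ∑ q, ∑ r, π q r w := (hsum w).symm
      _ = 0 := by simp [hproj]
  simp [hw0]
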